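/- Let k be a field, C a coalgebra over k with comultiplication Δ and counit ε, M and N k-vector spaces, and π : C → End_k(M), σ : C → End_k(N) k-linear maps. Define π' : C → End_k(M ⊗ N) as the composite of Δ : C → C ⊗ C, the map π ⊗ σ : C ⊗ C → End_k(M) ⊗ End_k(N), and the canonical map End_k(M) ⊗ End_k(N) → End_k(M ⊗ N). If there exists a nonzero vector ξ ∈ M with π(x)ξ = ε(x)·ξ for all x ∈ C, and if σ is injective, then π' is injective. -/

import Mathlib

open TensorProduct

/-- The tensor product of two "representations" `π : C → End M`, `σ : C → End N` of a
coalgebra `C`: the composite of `Δ : C → C ⊗ C`, `π ⊗ σ`, and the canonical map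
`End(M) ⊗ End(N) → End(M ⊗ N)`. -/
noncomputable def tensorProdRep (k : Type*) [CommRing k]
    (C : Type*) [AddCommGroup C] [Module k C] [Coalgebra k C]
    {M N : Type*} [AddCommGroup M] [Module k M] [AddCommGroup N] [Module k N]
    (π : C →ₗ[k] M →ₗ[k] M) (σ : C →ₗ[k] N →ₗ[k] N) :
    C →ₗ[k] (M ⊗[k] N →ₗ[k] M ⊗[k] N) :=
  TensorProduct.homTensorHomMap (RingHom.id k) M N M N ∘ₗ TensorProduct.map π σ ∘ₗ
    Coalgebra.comul

/-- Let `C` be a coalgebra over a field `k`, `M`, `N` vector spaces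
over `k`, `π : C → End(M)`, `σ : C → End(N)` linear maps, and
`π' = (canonical) ∘ (π ⊗ σ) ∘ Δ : C → End(M ⊗ N)`.  If some nonzero `ξ ∈ M`
satisfies `π(x)ξ = ε(x)·ξ` for all `x ∈ C` and `σ` is injective, then `π'` is
injective. -/
theorem tensorProdRep_injective
    (k : Type*) [Field k]
    (C : Type*) [AddCommGroup C] [Module k C] [Coalgebra k C]
    (M N : Type*) [AddCommGroup M] [Module k M] [AddCommGroup N] [Module k N]
    (π : C →ₗ[k] M →ₗ[k] M) (σ : C →ₗ[k] N →ₗ[k] N)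
    (ξ : M) (hξ0 : ξ ≠ 0)
    (hξ : ∀ x : C, π x ξ = (Coalgebra.counit (R := k) x) • ξ)
    (hσ : Function.Injective σ) :
    Function.Injective (tensorProdRep k C π σ) := by
  rw [← LinearMap.ker_eq_bot, LinearMap.ker_eq_bot']
  intro x hx
  have key : ∀ n : N, tensorProdRep k C π σ x (ξ ⊗ₜ[k] n) = ξ ⊗ₜ[k] (σ x n) := by
    intro n
    have h1 : ∀ c : C ⊗[k] C,
        TensorProduct.homTensorHomMap (RingHom.id k) M N M N (TensorProduct.map π σ c) (ξ ⊗ₜ[k] n)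
          = ξ ⊗ₜ[k] (TensorProduct.lid k N
              ((LinearMap.rTensor N (Coalgebra.counit (R := k)))
                ((LinearMap.lTensor C (σ.flip n)) c))) := by
      intro c
      induction c using TensorProduct.induction_on with
      | zero => simp
      | tmul a b =>
          simp [hξ a, TensorProduct.smul_tmul]
      | add c₁ c₂ h₁ h₂ =>
          simp [map_add, h₁, h₂, TensorProduct.tmul_add]
    have h2 : (LinearMap.rTensor N (Coalgebra.counit (R := k)))
        ((LinearMap.lTensor C (σ.flip n)) (Coalgebra.comul (R := k) x))
        = (LinearMap.lTensor k (σ.flip n))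
            ((LinearMap.rTensor C (Coalgebra.counit (R := k)))
              (Coalgebra.comul (R := k) x)) := by
      rw [← LinearMap.comp_apply, ← LinearMap.comp_apply,
        LinearMap.rTensor_comp_lTensor, ← LinearMap.lTensor_comp_rTensor]
      rfl
    simp only [tensorProdRep, LinearMap.comp_apply]
    rw [h1, h2, Coalgebra.rTensor_counit_comul]
    simp
  obtain ⟨f, hf⟩ : ∃ f : Module.Dual k M, f ξ ≠ 0 := by
    by_contra h
    push_neg at h
    exact hξ0 ((Module.forall_dual_apply_eq_zero_iff k ξ).mp (by simpa using h))
  have hσx : σ x = 0 := by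
    ext n
    have h0 : ξ ⊗ₜ[k] (σ x n) = 0 := by rw [← key n, hx]; simp
    have := congrArg (fun z => TensorProduct.lid k N (LinearMap.rTensor N f z)) h0
    simpa [hf, smul_eq_zero] using this
  exact hσ (by rw [hσx, map_zero])
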